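/- Let (V1,…,Vn) be a U_n-twisted isometry on H, A a subset of the index set, and W_A = ⋂_{i∈A} ker V_i*. Then for every j ∉ A, V_j maps W_A into W_A and V_j* maps W_A into W_A; i.e., W_A reduces V_j. -/

import Mathlib

open ContinuousLinearMap

set_option maxHeartbeats 1000000

section Aux

variable {H : Type*} [NormedAddCommGroup H] [InnerProductSpace ℂ H] [CompleteSpace H]

private lemma adjm (A B : H →L[ℂ] H) : adjoint (A * B) = adjoint B * adjoint A :=
  adjoint_comp A B

/-- If `t` commutes with a unitary `u`, it commutes with `adjoint u`. -/
private lemma comm_adj_unitary (u t : H →L[ℂ] H)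
    (huu' : u * adjoint u = 1) (hu'u : adjoint u * u = 1)
    (h : t * u = u * t) : t * adjoint u = adjoint u * t := by
  calc t * adjoint u = (adjoint u * u) * t * adjoint u := by rw [hu'u, one_mul]
    _ = adjoint u * (u * t) * adjoint u := by rw [mul_assoc (adjoint u) u t]
    _ = adjoint u * (t * u) * adjoint u := by rw [h]
    _ = adjoint u * t * (u * adjoint u) := by noncomm_ring
    _ = adjoint u * t := by rw [huu', mul_one]

/-- An adjoint-composed-with-itself zero operator is zero. -/
private lemma eq_zero_of_adj_mul_self (d : H →L[ℂ] H) (h : adjoint d * d = 0) : d = 0 := by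
  have hn : ‖adjoint d ∘L d‖ = ‖d‖ * ‖d‖ := norm_adjoint_comp_self d
  have h2 : (adjoint d ∘L d) = 0 := h
  rw [h2, norm_zero] at hn
  have : ‖d‖ = 0 := mul_self_eq_zero.mp hn.symm
  exact norm_eq_zero.mp this

/-- The key algebraic identity for twisted isometries: `V_j V_i = U_{ij}* V_i V_j`. -/
private lemma twist_key (u a b : H →L[ℂ] H)
    (huu' : u * adjoint u = 1) (hu'u : adjoint u * u = 1)
    (ha : adjoint a * a = 1) (hb : adjoint b * b = 1)
    (hau : a * u = u * a) (hbu : b * u = u * b)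
    (hab : adjoint a * b = adjoint u * (b * adjoint a))
    (hba : adjoint b * a = u * (a * adjoint b)) :
    b * a = adjoint u * (a * b) := by
  -- derived commutations
  have hau' : a * adjoint u = adjoint u * a := comm_adj_unitary u a huu' hu'u hau
  have hbu' : b * adjoint u = adjoint u * b := comm_adj_unitary u b huu' hu'u hbu
  have ha'u' : adjoint a * adjoint u = adjoint u * adjoint a := by
    have := congrArg adjoint hau
    rw [adjm, adjm] at this
    exact this.symm
  have hb'u' : adjoint b * adjoint u = adjoint u * adjoint b := by
    have := congrArg adjoint hbu
    rw [adjm, adjm] at this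
    exact this.symm
  have ha'u : adjoint a * u = u * adjoint a := by
    have := comm_adj_unitary (adjoint u) (adjoint a) (by rwa [adjoint_adjoint])
      (by rwa [adjoint_adjoint]) ha'u'
    rwa [adjoint_adjoint] at this
  have hb'u : adjoint b * u = u * adjoint b := by
    have := comm_adj_unitary (adjoint u) (adjoint b) (by rwa [adjoint_adjoint])
      (by rwa [adjoint_adjoint]) hb'u'
    rwa [adjoint_adjoint] at this
  set d : H →L[ℂ] H := b * a - adjoint u * (a * b) with hd
  have hdadj : adjoint d = adjoint a * adjoint b - (adjoint b * adjoint a) * u := by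
    rw [hd, map_sub, adjm, adjm, adjm, adjoint_adjoint]
  have T1 : (adjoint a * adjoint b) * (b * a) = 1 := by
    calc (adjoint a * adjoint b) * (b * a) = adjoint a * ((adjoint b * b) * a) := by noncomm_ring
      _ = adjoint a * a := by rw [hb, one_mul]
      _ = 1 := ha
  have T2 : (adjoint a * adjoint b) * (adjoint u * (a * b)) = 1 := by
    calc (adjoint a * adjoint b) * (adjoint u * (a * b))
        = adjoint a * (adjoint b * adjoint u) * (a * b) := by noncomm_ring
      _ = adjoint a * (adjoint u * adjoint b) * (a * b) := by rw [hb'u']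
      _ = (adjoint a * adjoint u) * ((adjoint b * a) * b) := by noncomm_ring
      _ = (adjoint u * adjoint a) * ((adjoint b * a) * b) := by rw [ha'u']
      _ = (adjoint u * adjoint a) * ((u * (a * adjoint b)) * b) := by rw [hba]
      _ = adjoint u * ((adjoint a * u) * (a * (adjoint b * b))) := by noncomm_ring
      _ = adjoint u * ((u * adjoint a) * (a * 1)) := by rw [hb, ha'u]
      _ = adjoint u * (u * (adjoint a * a)) := by noncomm_ring
      _ = adjoint u * (u * 1) := by rw [ha]
      _ = 1 := by rw [mul_one, hu'u]
  have T3 : ((adjoint b * adjoint a) * u) * (b * a) = 1 := by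
    calc ((adjoint b * adjoint a) * u) * (b * a)
        = (adjoint b * adjoint a) * ((u * b) * a) := by noncomm_ring
      _ = (adjoint b * adjoint a) * ((b * u) * a) := by rw [← hbu]
      _ = adjoint b * ((adjoint a * b) * (u * a)) := by noncomm_ring
      _ = adjoint b * ((adjoint u * (b * adjoint a)) * (u * a)) := by rw [hab]
      _ = (adjoint b * adjoint u) * (b * ((adjoint a * u) * a)) := by noncomm_ring
      _ = (adjoint u * adjoint b) * (b * ((u * adjoint a) * a)) := by rw [hb'u', ha'u]
      _ = adjoint u * ((adjoint b * b) * (u * (adjoint a * a))) := by noncomm_ring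
      _ = adjoint u * (1 * (u * 1)) := by rw [hb, ha]
      _ = 1 := by rw [one_mul, mul_one, hu'u]
  have T4 : ((adjoint b * adjoint a) * u) * (adjoint u * (a * b)) = 1 := by
    calc ((adjoint b * adjoint a) * u) * (adjoint u * (a * b))
        = (adjoint b * adjoint a) * ((u * adjoint u) * (a * b)) := by noncomm_ring
      _ = (adjoint b * adjoint a) * (a * b) := by rw [huu', one_mul]
      _ = adjoint b * ((adjoint a * a) * b) := by noncomm_ring
      _ = adjoint b * b := by rw [ha, one_mul]
      _ = 1 := hb
  have hdd : adjoint d * d = 0 := by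
    rw [hdadj, hd, sub_mul, mul_sub, mul_sub, T1, T2, T3, T4]
    simp
  have : d = 0 := eq_zero_of_adj_mul_self d hdd
  have := sub_eq_zero.mp this
  exact this

end Aux

theorem stmt_4 {H : Type*} [NormedAddCommGroup H] [InnerProductSpace ℂ H] [CompleteSpace H]
    {n : ℕ} (U : Fin n → Fin n → (H →L[ℂ] H)) (V : Fin n → (H →L[ℂ] H))
    (hUu : ∀ i j, i ≠ j → U i j * adjoint (U i j) = 1 ∧ adjoint (U i j) * U i j = 1)
    (hUsym : ∀ i j, i ≠ j → U j i = adjoint (U i j))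
    (hUcomm : ∀ i j s t, i ≠ j → s ≠ t → U i j * U s t = U s t * U i j)
    (hViso : ∀ i, adjoint (V i) * V i = 1)
    (hVU : ∀ p s t, s ≠ t → V p * U s t = U s t * V p)
    (htw : ∀ i j, i ≠ j → adjoint (V i) * V j = adjoint (U i j) * (V j * adjoint (V i)))
    (A : Set (Fin n))
    (W : Submodule ℂ H) (hW : W = ⨅ i ∈ A, LinearMap.ker (adjoint (V i) : H →ₗ[ℂ] H)) :
    ∀ j ∉ A, ∀ x ∈ W, V j x ∈ W ∧ adjoint (V j) x ∈ W := by
  intro j hj x hx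
  rw [hW] at hx ⊢
  simp only [Submodule.mem_iInf, LinearMap.mem_ker, ContinuousLinearMap.coe_coe] at hx ⊢
  have hmem : ∀ i ∈ A, adjoint (V i) x = 0 := hx
  constructor
  · intro i hi
    have hij : i ≠ j := fun h => hj (h ▸ hi)
    have h1 := congrFun (congrArg (DFunLike.coe ·) (htw i j hij)) x
    simp only [ContinuousLinearMap.mul_apply] at h1
    rw [h1, hmem i hi, map_zero, map_zero]
  · intro i hi
    have hij : i ≠ j := fun h => hj (h ▸ hi)
    -- key identity : V j * V i = adjoint (U i j) * (V i * V j)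
    have hkey : V j * V i = adjoint (U i j) * (V i * V j) := by
      apply twist_key (U i j) (V i) (V j) (hUu i j hij).1 (hUu i j hij).2 (hViso i) (hViso j)
        (hVU i i j hij) (hVU j i j hij) (htw i j hij)
      have h := htw j i hij.symm
      rwa [hUsym i j hij, adjoint_adjoint] at h
    -- take adjoints
    have hadj : adjoint (V i) * adjoint (V j) = (adjoint (V j) * adjoint (V i)) * U i j := by
      have := congrArg adjoint hkey
      rw [adjm, adjm, adjm, adjoint_adjoint] at this
      exact this
    -- adjoint (V i) commutes with U i j
    have hcomm : adjoint (V i) * U i j = U i j * adjoint (V i) := by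
      have h := congrArg adjoint (hVU i i j hij)
      rw [adjm, adjm] at h
      have h2 := comm_adj_unitary (adjoint (U i j)) (adjoint (V i))
        (by rw [adjoint_adjoint]; exact (hUu i j hij).2)
        (by rw [adjoint_adjoint]; exact (hUu i j hij).1) h.symm
      rwa [adjoint_adjoint] at h2
    have h1 := congrFun (congrArg (DFunLike.coe ·) hadj) x
    have h2 := congrFun (congrArg (DFunLike.coe ·) hcomm) x
    simp only [ContinuousLinearMap.mul_apply] at h1 h2
    rw [h1]
    have : adjoint (V i) (U i j x) = U i j (adjoint (V i) x) := h2
    rw [h2, hmem i hi, map_zero, map_zero]
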